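/- Every finite-dimensional von Neumann algebra M = ⊕ᵢ I_{nᵢ} ⊗ M_{nᵢ}(ℂ) admits a basis consisting entirely of unitary matrices which are pairwise orthogonal under the normalized trace inner product. -/

import Mathlib

open Matrix Kronecker Finset

/-- Membership in the block algebra `M = ⊕ᵢ I_{nᵢ} ⊗ M_{nᵢ}(ℂ)`. -/
def MemBlockAlg {m : ℕ} (n : Fin m → ℕ)
    (A : Matrix ((i : Fin m) × (Fin (n i) × Fin (n i)))
      ((i : Fin m) × (Fin (n i) × Fin (n i))) ℂ) : Prop :=
  ∃ B : ∀ i, Matrix (Fin (n i)) (Fin (n i)) ℂ,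
    A = Matrix.blockDiagonal' fun i => (1 : Matrix (Fin (n i)) (Fin (n i)) ℂ) ⊗ₖ B i

namespace OUB

noncomputable section

open Complex

/-- `ph z N = exp (2 π i z / N)`. -/
def ph (z : ℤ) (N : ℕ) : ℂ := Complex.exp (2 * (Real.pi : ℂ) * Complex.I * (z : ℂ) / (N : ℂ))

lemma ph_zero (N : ℕ) : ph 0 N = 1 := by simp [ph]

lemma ph_add (z w : ℤ) (N : ℕ) : ph (z + w) N = ph z N * ph w N := by
  rw [ph, ph, ph, ← Complex.exp_add]
  congr 1
  push_cast
  ring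

lemma ph_star (z : ℤ) (N : ℕ) : star (ph z N) = ph (-z) N := by
  rw [ph, ph]
  rw [show (star (Complex.exp (2 * (Real.pi:ℂ) * Complex.I * (z:ℂ) / (N:ℂ))) :ℂ)
      = (starRingEnd ℂ) (Complex.exp (2 * (Real.pi:ℂ) * Complex.I * (z:ℂ) / (N:ℂ))) from rfl]
  rw [← Complex.exp_conj]
  congr 1
  simp only [map_div₀, _root_.map_mul, Complex.conj_I, Complex.conj_ofReal, map_intCast,
    map_natCast, map_ofNat]
  push_cast
  ring

lemma ph_mul_star (z w : ℤ) (N : ℕ) : ph z N * star (ph w N) = ph (z - w) N := by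
  rw [ph_star, ← ph_add]
  ring_nf

lemma ph_pow (z : ℤ) (N : ℕ) (t : ℕ) : ph z N ^ t = ph (z * t) N := by
  rw [ph, ph, ← Complex.exp_nat_mul]
  congr 1
  push_cast
  ring

lemma ph_mul_self (z : ℤ) {N : ℕ} (hN : N ≠ 0) : ph (z * N) N = 1 := by
  have hN' : (N : ℂ) ≠ 0 := Nat.cast_ne_zero.mpr hN
  rw [ph]
  rw [show 2 * (Real.pi:ℂ) * Complex.I * ((z * (N:ℤ) : ℤ) : ℂ) / (N : ℂ)
      = (z : ℂ) * (2 * (Real.pi:ℂ) * Complex.I) by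
    push_cast
    field_simp]
  exact Complex.exp_int_mul_two_pi_mul_I z

lemma ph_ne_one {z : ℤ} {N : ℕ} (hN : N ≠ 0) (h : ¬ ((N : ℤ) ∣ z)) : ph z N ≠ 1 := by
  intro hone
  apply h
  rw [ph, Complex.exp_eq_one_iff] at hone
  obtain ⟨t, ht⟩ := hone
  refine ⟨t, ?_⟩
  have hN' : (N : ℂ) ≠ 0 := Nat.cast_ne_zero.mpr hN
  have hπ : (Real.pi : ℂ) ≠ 0 := Complex.ofReal_ne_zero.mpr Real.pi_ne_zero
  have hne : (2 * (Real.pi:ℂ) * Complex.I) ≠ 0 := by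
    simp [hπ, Complex.I_ne_zero]
  have ht' : 2 * (Real.pi:ℂ) * Complex.I * (z : ℂ)
      = (t : ℂ) * (2 * (Real.pi:ℂ) * Complex.I) * (N : ℂ) := by
    have h2 := congrArg (fun w => w * (N : ℂ)) ht
    simpa [div_mul_cancel₀, hN'] using h2
  have key : (z : ℂ) = (N : ℂ) * (t : ℂ) := by
    apply mul_left_cancel₀ hne
    linear_combination ht'
  exact_mod_cast key

lemma sum_ph_range {N : ℕ} (hN : N ≠ 0) {z : ℤ} (h : ¬ ((N : ℤ) ∣ z)) :
    ∑ t ∈ Finset.range N, ph (z * t) N = 0 := by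
  have h1 : ph z N ≠ 1 := ph_ne_one hN h
  have hsum : ∑ t ∈ Finset.range N, ph (z * t) N = ∑ t ∈ Finset.range N, ph z N ^ t :=
    Finset.sum_congr rfl fun t _ => by rw [ph_pow]
  rw [hsum, geom_sum_eq h1, ph_pow, ph_mul_self z hN]
  simp

lemma sum_ph_fin {N : ℕ} (hN : N ≠ 0) {z : ℤ} (h : ¬ ((N : ℤ) ∣ z)) :
    ∑ t : Fin N, ph (z * (t : ℕ)) N = 0 := by
  rw [Fin.sum_univ_eq_sum_range (fun t : ℕ => ph (z * t) N) N]
  exact sum_ph_range hN h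

section Matrices

variable {m : ℕ} (n : Fin m → ℕ) (d : ℕ)

/-- Offset of block `i` inside `{0, …, d-1}`. -/
def off (i : Fin m) : ℕ := ∑ j ∈ Finset.Iio i, n j ^ 2

/-- Mixed-radix position of `(i, x, y)` inside `{0, …, d-1}`. -/
def posN (s : (i : Fin m) × (Fin (n i) × Fin (n i))) : ℕ :=
  off n s.1 + (n s.1 * (s.2.1 : ℕ) + (s.2.2 : ℕ))

lemma inner_lt {N : ℕ} (x y : Fin N) : N * (x : ℕ) + (y : ℕ) < N ^ 2 := by
  have hx : (x : ℕ) + 1 ≤ N := x.isLt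
  have hy : (y : ℕ) < N := y.isLt
  calc N * (x : ℕ) + (y : ℕ) < N * (x : ℕ) + N := by omega
    _ = N * ((x : ℕ) + 1) := by ring
    _ ≤ N * N := Nat.mul_le_mul_left N hx
    _ = N ^ 2 := (sq N).symm

lemma off_succ_le (i j : Fin m) (hij : i < j) : off n i + n i ^ 2 ≤ off n j := by
  have hsub : insert i (Finset.Iio i) ⊆ Finset.Iio j := by
    intro a ha
    rcases Finset.mem_insert.mp ha with h | h
    · subst h; exact Finset.mem_Iio.mpr hij
    · exact Finset.mem_Iio.mpr ((Finset.mem_Iio.mp h).trans hij)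
  have hnot : i ∉ Finset.Iio i := by simp
  have hle := Finset.sum_le_sum_of_subset (f := fun j => n j ^ 2) hsub
  rwa [Finset.sum_insert hnot, add_comm] at hle

lemma off_add_le (hd : d = ∑ i, n i ^ 2) (i : Fin m) : off n i + n i ^ 2 ≤ d := by
  subst hd
  have hnot : i ∉ Finset.Iio i := by simp
  have hle := Finset.sum_le_sum_of_subset (f := fun j => n j ^ 2)
    (Finset.subset_univ (insert i (Finset.Iio i)))
  rwa [Finset.sum_insert hnot, add_comm] at hle

lemma posN_lt (hd : d = ∑ i, n i ^ 2) (s : (i : Fin m) × (Fin (n i) × Fin (n i))) :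
    posN n s < d := by
  have h1 := inner_lt s.2.1 s.2.2
  have h2 := off_add_le n d hd s.1
  unfold posN
  omega

lemma posN_injective (hn : ∀ i, 0 < n i) : Function.Injective (posN n) := by
  rintro ⟨i, x, y⟩ ⟨i', x', y'⟩ h
  unfold posN at h
  dsimp only at h
  have hii : i = i' := by
    by_contra hne
    rcases lt_or_gt_of_ne hne with hlt | hlt
    · have h1 : off n i + (n i * (x : ℕ) + (y : ℕ)) < off n i' := by
        have := inner_lt x y
        have := off_succ_le n i i' hlt
        omega
      have h2 : off n i' ≤ off n i' + (n i' * (x' : ℕ) + (y' : ℕ)) := Nat.le_add_right _ _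
      omega
    · have h1 : off n i' + (n i' * (x' : ℕ) + (y' : ℕ)) < off n i := by
        have := inner_lt x' y'
        have := off_succ_le n i' i hlt
        omega
      have h2 : off n i ≤ off n i + (n i * (x : ℕ) + (y : ℕ)) := Nat.le_add_right _ _
      omega
  subst hii
  have h' : n i * (x : ℕ) + (y : ℕ) = n i * (x' : ℕ) + (y' : ℕ) := by omega
  have hy : (y : ℕ) = (y' : ℕ) := by
    have h1 := y.isLt
    have h2 := y'.isLt
    have hmod := congrArg (· % n i) h'
    simpa [Nat.mul_add_mod, Nat.mod_eq_of_lt h1, Nat.mod_eq_of_lt h2] using hmod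
  have hx : (x : ℕ) = (x' : ℕ) := by
    have : n i * (x : ℕ) = n i * (x' : ℕ) := by omega
    exact Nat.eq_of_mul_eq_mul_left (hn i) this
  have hxe : x = x' := Fin.ext hx
  have hye : y = y' := Fin.ext hy
  subst hxe; subst hye; rfl

/-- The bijection `(i, x, y) ↦ o_i + n_i x + y` onto `Fin d`. -/
def posF (hd : d = ∑ i, n i ^ 2) : ((i : Fin m) × (Fin (n i) × Fin (n i))) → Fin d :=
  fun s => ⟨posN n s, posN_lt n d hd s⟩

lemma posF_bijective (hn : ∀ i, 0 < n i) (hd : d = ∑ i, n i ^ 2) :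
    Function.Bijective (posF n d hd) := by
  rw [Fintype.bijective_iff_injective_and_card]
  constructor
  · intro a b hab
    exact posN_injective n hn (by simpa [posF, Fin.ext_iff] using hab)
  · simp [Fintype.card_sigma, hd, sq]

/-- Diagonal phase matrix `D_i(k)`. -/
def Dm (i : Fin m) (k : ℤ) : Matrix (Fin (n i)) (Fin (n i)) ℂ :=
  Matrix.diagonal fun x => ph (k * ((off n i + n i * (x : ℕ) : ℕ) : ℤ)) d

/-- Diagonal phase matrix `E_i(k)`. -/
def Em (i : Fin m) (k : ℤ) : Matrix (Fin (n i)) (Fin (n i)) ℂ :=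
  Matrix.diagonal fun y => ph (k * ((y : ℕ) : ℤ)) d

/-- Unnormalized Fourier matrix of size `n i`. -/
def Fm (i : Fin m) : Matrix (Fin (n i)) (Fin (n i)) ℂ :=
  Matrix.of fun x y => ph ((((x : ℕ) * (y : ℕ) : ℕ)) : ℤ) (n i)

/-- `C_i(k) = n_i⁻¹ • F_i E_i(k) F_iᴴ`. -/
def Cm (i : Fin m) (k : ℤ) : Matrix (Fin (n i)) (Fin (n i)) ℂ :=
  ((n i : ℂ))⁻¹ • (Fm n i * Em n d i k * (Fm n i)ᴴ)

/-- `B_i(k) = D_i(k) C_i(k)`. -/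
def Bm (i : Fin m) (k : ℤ) : Matrix (Fin (n i)) (Fin (n i)) ℂ :=
  Dm n d i k * Cm n d i k

/-- The `k`-th element of the orthogonal unitary basis. -/
def Um (k : ℤ) : Matrix ((i : Fin m) × (Fin (n i) × Fin (n i)))
    ((i : Fin m) × (Fin (n i) × Fin (n i))) ℂ :=
  Matrix.blockDiagonal' fun i => (1 : Matrix (Fin (n i)) (Fin (n i)) ℂ) ⊗ₖ Bm n d i k

lemma diag_ph_mul_conjT {ι : Type*} [Fintype ι] [DecidableEq ι] (f : ι → ℤ) (N : ℕ) :
    (Matrix.diagonal fun x => ph (f x) N) * (Matrix.diagonal fun x => ph (f x) N)ᴴ = 1 := by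
  rw [Matrix.diagonal_conjTranspose, Matrix.diagonal_mul_diagonal]
  simp only [Pi.star_apply, ph_mul_star, sub_self, ph_zero]
  exact Matrix.diagonal_one

lemma Fm_mul_conjT (hn : ∀ i, 0 < n i) (i : Fin m) :
    Fm n i * (Fm n i)ᴴ = (n i : ℂ) • (1 : Matrix (Fin (n i)) (Fin (n i)) ℂ) := by
  ext x z
  rw [Matrix.mul_apply]
  have hterm : ∀ y : Fin (n i), Fm n i x y * (Fm n i)ᴴ y z
      = ph ((((x : ℕ) : ℤ) - ((z : ℕ) : ℤ)) * ((y : ℕ) : ℤ)) (n i) := by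
    intro y
    rw [Matrix.conjTranspose_apply]
    show ph _ (n i) * star (ph _ (n i)) = _
    rw [ph_mul_star]
    congr 1
    push_cast
    ring
  rw [Finset.sum_congr rfl fun y _ => hterm y]
  by_cases hxz : x = z
  · subst hxz
    simp [sub_self, ph_zero, Matrix.one_apply_eq, Finset.card_univ]
  · have hne0 : (((x : ℕ) : ℤ) - ((z : ℕ) : ℤ)) ≠ 0 := by
      intro h0
      exact hxz (Fin.ext (by omega))
    have hdvd : ¬ ((n i : ℤ) ∣ (((x : ℕ) : ℤ) - ((z : ℕ) : ℤ))) := by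
      intro hdvd
      have hle := Int.le_of_dvd (abs_pos.mpr hne0) ((dvd_abs _ _).mpr hdvd)
      have hx := x.isLt
      have hz := z.isLt
      rcases abs_cases (((x : ℕ) : ℤ) - ((z : ℕ) : ℤ)) with ⟨he, _⟩ | ⟨he, _⟩ <;> omega
    rw [sum_ph_fin (hn i).ne' hdvd]
    simp [Matrix.one_apply_ne hxz]

lemma Fm_conjT_mul (hn : ∀ i, 0 < n i) (i : Fin m) :
    (Fm n i)ᴴ * Fm n i = (n i : ℂ) • (1 : Matrix (Fin (n i)) (Fin (n i)) ℂ) := by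
  have hne : (n i : ℂ) ≠ 0 := Nat.cast_ne_zero.mpr (hn i).ne'
  have h1 : Fm n i * ((n i : ℂ)⁻¹ • (Fm n i)ᴴ) = 1 := by
    rw [mul_smul_comm, Fm_mul_conjT n hn i, smul_smul, inv_mul_cancel₀ hne, one_smul]
  have h2 := mul_eq_one_comm.mp h1
  rw [smul_mul_assoc] at h2
  have h3 := congrArg (fun M => (n i : ℂ) • M) h2
  simpa [smul_smul, mul_inv_cancel₀ hne] using h3

lemma Em_mul_conjT (i : Fin m) (j k : ℤ) :
    Em n d i j * (Em n d i k)ᴴ = Matrix.diagonal fun y : Fin (n i) => ph ((j - k) * ((y : ℕ) : ℤ)) d := by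
  ext a b
  rcases eq_or_ne a b with rfl | hab
  · rw [Em, Em, Matrix.diagonal_conjTranspose, Matrix.diagonal_mul_diagonal,
      Matrix.diagonal_apply_eq, Matrix.diagonal_apply_eq, Pi.star_apply, ph_mul_star]
    congr 1
    ring
  · rw [Em, Em, Matrix.diagonal_conjTranspose, Matrix.diagonal_mul_diagonal,
      Matrix.diagonal_apply_ne _ hab, Matrix.diagonal_apply_ne _ hab]

lemma Cm_mul_conjT (hn : ∀ i, 0 < n i) (i : Fin m) (j k : ℤ) :
    Cm n d i j * (Cm n d i k)ᴴ
      = (n i : ℂ)⁻¹ • (Fm n i *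
          (Matrix.diagonal fun y : Fin (n i) => ph ((j - k) * ((y : ℕ) : ℤ)) d) * (Fm n i)ᴴ) := by
  have hne : (n i : ℂ) ≠ 0 := Nat.cast_ne_zero.mpr (hn i).ne'
  rw [Cm, Cm, Matrix.conjTranspose_smul]
  have hct : (Fm n i * Em n d i k * (Fm n i)ᴴ)ᴴ = Fm n i * (Em n d i k)ᴴ * (Fm n i)ᴴ := by
    rw [Matrix.conjTranspose_mul, Matrix.conjTranspose_mul, Matrix.conjTranspose_conjTranspose,
      Matrix.mul_assoc]
  rw [hct]
  have hstar : star ((n i : ℂ)⁻¹) = (n i : ℂ)⁻¹ := by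
    rw [star_inv₀, star_natCast]
  rw [hstar, smul_mul_smul_comm]
  have hmid : (Fm n i * Em n d i j * (Fm n i)ᴴ) * (Fm n i * (Em n d i k)ᴴ * (Fm n i)ᴴ)
      = (n i : ℂ) • (Fm n i * (Em n d i j * (Em n d i k)ᴴ) * (Fm n i)ᴴ) := by
    simp only [Matrix.mul_assoc]
    rw [← Matrix.mul_assoc ((Fm n i)ᴴ) (Fm n i), Fm_conjT_mul n hn i, Matrix.smul_mul,
      Matrix.one_mul]
    simp only [Matrix.mul_smul, Matrix.smul_mul]
  rw [hmid, smul_smul, Em_mul_conjT n d i j k]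
  congr 1
  field_simp

lemma Bm_unitary (hn : ∀ i, 0 < n i) (i : Fin m) (k : ℤ) :
    Bm n d i k * (Bm n d i k)ᴴ = 1 := by
  have hne : (n i : ℂ) ≠ 0 := Nat.cast_ne_zero.mpr (hn i).ne'
  rw [Bm, Matrix.conjTranspose_mul, ← Matrix.mul_assoc, Matrix.mul_assoc (Dm n d i k),
    Cm_mul_conjT n d hn i k k]
  have hdiag : (Matrix.diagonal fun y : Fin (n i) => ph ((k - k) * ((y : ℕ) : ℤ)) d)
      = (1 : Matrix (Fin (n i)) (Fin (n i)) ℂ) := by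
    have hfun : (fun y : Fin (n i) => ph ((k - k) * ((y : ℕ) : ℤ)) d) = fun _ => (1 : ℂ) := by
      funext y
      rw [sub_self, zero_mul, ph_zero]
    rw [hfun, Matrix.diagonal_one]
  rw [hdiag, Matrix.mul_one, Fm_mul_conjT n hn i, smul_smul, inv_mul_cancel₀ hne, one_smul]
  rw [Matrix.mul_one, Dm, diag_ph_mul_conjT]

lemma kronecker_conjT {p q : Type*} [Fintype p] [Fintype q]
    (A : Matrix p p ℂ) (B : Matrix q q ℂ) : (A ⊗ₖ B)ᴴ = Aᴴ ⊗ₖ Bᴴ := by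
  ext ⟨a, b⟩ ⟨c, e⟩
  simp [Matrix.conjTranspose_apply, star_mul']

lemma Um_unitary (hn : ∀ i, 0 < n i) (k : ℤ) : Um n d k * (Um n d k)ᴴ = 1 := by
  rw [Um, Matrix.blockDiagonal'_conjTranspose, ← Matrix.blockDiagonal'_mul]
  have hblock : (fun i => ((1 : Matrix (Fin (n i)) (Fin (n i)) ℂ) ⊗ₖ Bm n d i k) *
      ((1 : Matrix (Fin (n i)) (Fin (n i)) ℂ) ⊗ₖ Bm n d i k)ᴴ)
      = fun i => (1 : Matrix (Fin (n i) × Fin (n i)) (Fin (n i) × Fin (n i)) ℂ) := by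
    funext i
    rw [kronecker_conjT, Matrix.conjTranspose_one, ← Matrix.mul_kronecker_mul, Matrix.one_mul,
      Bm_unitary n d hn i k, Matrix.one_kronecker_one]
  rw [hblock]
  exact Matrix.blockDiagonal'_one

lemma trace_diag_mul_mul_diag {N : ℕ} (v w : Fin N → ℂ) (M : Matrix (Fin N) (Fin N) ℂ) :
    Matrix.trace (Matrix.diagonal v * M * Matrix.diagonal w) = ∑ x, v x * M x x * w x := by
  rw [Matrix.trace]
  refine Finset.sum_congr rfl fun x _ => ?_
  rw [Matrix.diag_apply, Matrix.mul_diagonal, Matrix.diagonal_mul]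

lemma F_sandwich_diag (i : Fin m) (g : Fin (n i) → ℂ) (x : Fin (n i)) :
    (Fm n i * Matrix.diagonal g * (Fm n i)ᴴ) x x = ∑ y, g y := by
  rw [Matrix.mul_apply]
  refine Finset.sum_congr rfl fun y _ => ?_
  rw [Matrix.mul_diagonal, Matrix.conjTranspose_apply]
  show Fm n i x y * g y * star (Fm n i x y) = g y
  rw [mul_comm (Fm n i x y) (g y), mul_assoc]
  show g y * (ph _ (n i) * star (ph _ (n i))) = g y
  rw [ph_mul_star, sub_self, ph_zero, mul_one]

lemma trace_Bm (hn : ∀ i, 0 < n i) (i : Fin m) (j k : ℤ) :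
    (n i : ℂ) * Matrix.trace (Bm n d i j * (Bm n d i k)ᴴ)
      = ∑ x : Fin (n i), ∑ y : Fin (n i),
          ph ((j - k) * ((posN n ⟨i, (x, y)⟩ : ℕ) : ℤ)) d := by
  have hne : (n i : ℂ) ≠ 0 := Nat.cast_ne_zero.mpr (hn i).ne'
  rw [Bm, Bm, Matrix.conjTranspose_mul, ← Matrix.mul_assoc, Matrix.mul_assoc (Dm n d i j),
    Cm_mul_conjT n d hn i j k]
  rw [Matrix.mul_smul, Matrix.smul_mul, Matrix.trace_smul, smul_eq_mul, ← mul_assoc,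
    mul_inv_cancel₀ hne, one_mul]
  rw [Dm, Dm, Matrix.diagonal_conjTranspose, trace_diag_mul_mul_diag]
  refine Finset.sum_congr rfl fun x _ => ?_
  rw [F_sandwich_diag, Finset.mul_sum, Finset.sum_mul]
  refine Finset.sum_congr rfl fun y _ => ?_
  rw [Pi.star_apply, mul_right_comm, ph_mul_star, ← ph_add]
  congr 1
  have hpos : (posN n ⟨i, (x, y)⟩ : ℕ) = off n i + n i * (x : ℕ) + (y : ℕ) := by
    simp [posN, add_assoc]
  rw [hpos]
  push_cast
  ring

lemma trace_Um_mul (j k : ℤ) :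
    Matrix.trace (Um n d j * (Um n d k)ᴴ)
      = ∑ i, (n i : ℂ) * Matrix.trace (Bm n d i j * (Bm n d i k)ᴴ) := by
  rw [Um, Um, Matrix.blockDiagonal'_conjTranspose, ← Matrix.blockDiagonal'_mul,
    Matrix.trace_blockDiagonal']
  refine Finset.sum_congr rfl fun i _ => ?_
  rw [kronecker_conjT, Matrix.conjTranspose_one, ← Matrix.mul_kronecker_mul, Matrix.one_mul,
    Matrix.trace_kronecker, Matrix.trace_one]
  simp

lemma card_sigma_eq (hd : d = ∑ i, n i ^ 2) :
    Fintype.card ((i : Fin m) × (Fin (n i) × Fin (n i))) = d := by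
  simp [Fintype.card_sigma, hd, sq]

lemma trace_Um_orth (hn : ∀ i, 0 < n i) (hd : d = ∑ i, n i ^ 2) (j k : Fin d) (hjk : j ≠ k) :
    Matrix.trace (Um n d ((j : ℕ) : ℤ) * (Um n d ((k : ℕ) : ℤ))ᴴ) = 0 := by
  have hd0 : d ≠ 0 := (Fin.pos j).ne'
  set Δ : ℤ := ((j : ℕ) : ℤ) - ((k : ℕ) : ℤ) with hΔ
  rw [trace_Um_mul, Finset.sum_congr rfl fun i _ => trace_Bm n d hn i _ _]
  have hnest : (∑ i, ∑ x : Fin (n i), ∑ y : Fin (n i),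
        ph (Δ * ((posN n ⟨i, (x, y)⟩ : ℕ) : ℤ)) d)
      = ∑ s : (i : Fin m) × (Fin (n i) × Fin (n i)), ph (Δ * ((posN n s : ℕ) : ℤ)) d := by
    rw [← Finset.univ_sigma_univ, Finset.sum_sigma]
    refine Finset.sum_congr rfl fun i _ => ?_
    exact (Fintype.sum_prod_type
      (f := fun s : Fin (n i) × Fin (n i) => ph (Δ * ((posN n ⟨i, s⟩ : ℕ) : ℤ)) d)).symm
  rw [hnest]
  have hreindex : (∑ s : (i : Fin m) × (Fin (n i) × Fin (n i)),
        ph (Δ * ((posN n s : ℕ) : ℤ)) d)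
      = ∑ t : Fin d, ph (Δ * ((t : ℕ) : ℤ)) d := by
    exact Fintype.sum_bijective (posF n d hd) (posF_bijective n d hn hd) _ _ fun s => rfl
  rw [hreindex]
  have hΔ0 : Δ ≠ 0 := by
    intro h0
    apply hjk
    apply Fin.ext
    omega
  have hdvd : ¬ ((d : ℤ) ∣ Δ) := by
    intro hdvd
    have hle := Int.le_of_dvd (abs_pos.mpr hΔ0) ((dvd_abs _ _).mpr hdvd)
    have hj := j.isLt
    have hk := k.isLt
    rcases abs_cases Δ with ⟨he, _⟩ | ⟨he, _⟩ <;> omega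
  exact sum_ph_fin hd0 hdvd

lemma trace_Um_self (hn : ∀ i, 0 < n i) (hd : d = ∑ i, n i ^ 2) (k : ℤ) :
    Matrix.trace (Um n d k * (Um n d k)ᴴ) = (d : ℂ) := by
  rw [Um_unitary n d hn k, Matrix.trace_one, card_sigma_eq n d hd]

end Matrices

end

end OUB

/-- Every finite-dimensional von Neumann algebra `M = ⊕ᵢ I_{nᵢ} ⊗ M_{nᵢ}(ℂ)` admits a
basis of unitary matrices that are pairwise orthogonal under the normalized trace
inner product `⟨A,B⟩ = (1/d)tr(AB*)`, `d = Σ nᵢ²`. -/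
theorem exists_orthogonal_unitary_basis (m : ℕ) (n : Fin m → ℕ)
    (hn : ∀ i, 0 < n i) (d : ℕ) (hd : d = ∑ i, n i ^ 2) :
    ∃ u : Fin d → Matrix ((i : Fin m) × (Fin (n i) × Fin (n i)))
        ((i : Fin m) × (Fin (n i) × Fin (n i))) ℂ,
      (∀ k, MemBlockAlg n (u k)) ∧
      (∀ k, u k * (u k)ᴴ = 1) ∧
      (∀ j k, j ≠ k → (1 / (d : ℂ)) * Matrix.trace (u j * (u k)ᴴ) = 0) ∧
      LinearIndependent ℂ u ∧
      (∀ A, MemBlockAlg n A → A ∈ Submodule.span ℂ (Set.range u)) := by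
  classical
  have hLI : LinearIndependent ℂ (fun k : Fin d => OUB.Um n d ((k : ℕ) : ℤ)) := by
    rw [Fintype.linearIndependent_iff]
    intro g hg j
    have htr := congrArg (fun A => Matrix.trace (A * (OUB.Um n d ((j : ℕ) : ℤ))ᴴ)) hg
    simp only [Matrix.sum_mul, Matrix.smul_mul, Matrix.trace_sum, Matrix.trace_smul,
      smul_eq_mul, Matrix.zero_mul, Matrix.trace_zero] at htr
    have hsum : ∀ k : Fin d, k ∈ Finset.univ →
        g k * Matrix.trace (OUB.Um n d ((k : ℕ) : ℤ) * (OUB.Um n d ((j : ℕ) : ℤ))ᴴ)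
          = if k = j then g k * (d : ℂ) else 0 := by
      intro k _
      by_cases hkj : k = j
      · subst hkj
        rw [OUB.trace_Um_self n d hn hd, if_pos rfl]
      · rw [OUB.trace_Um_orth n d hn hd k j hkj, mul_zero, if_neg hkj]
    rw [Finset.sum_congr rfl hsum, Finset.sum_ite_eq' Finset.univ j
      (fun k => g k * (d : ℂ))] at htr
    simp only [Finset.mem_univ, if_true] at htr
    have hd0 : (d : ℂ) ≠ 0 := Nat.cast_ne_zero.mpr (Fin.pos j).ne'
    exact (mul_eq_zero.mp htr).resolve_right hd0
  refine ⟨fun k => OUB.Um n d ((k : ℕ) : ℤ), ?_, ?_, ?_, hLI, ?_⟩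
  · intro k
    exact ⟨fun i => OUB.Bm n d i ((k : ℕ) : ℤ), rfl⟩
  · intro k
    exact OUB.Um_unitary n d hn _
  · intro j k hjk
    rw [OUB.trace_Um_orth n d hn hd j k hjk, mul_zero]
  · -- spanning, by a dimension count
    let Φ : (∀ i, Matrix (Fin (n i)) (Fin (n i)) ℂ) →ₗ[ℂ]
        Matrix ((i : Fin m) × (Fin (n i) × Fin (n i)))
          ((i : Fin m) × (Fin (n i) × Fin (n i))) ℂ :=
      { toFun := fun C => Matrix.blockDiagonal' fun i =>
          (1 : Matrix (Fin (n i)) (Fin (n i)) ℂ) ⊗ₖ C i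
        map_add' := by
          intro C C'
          have hfun : (fun i => (1 : Matrix (Fin (n i)) (Fin (n i)) ℂ) ⊗ₖ (C + C') i)
              = (fun i => (1 : Matrix (Fin (n i)) (Fin (n i)) ℂ) ⊗ₖ C i)
                + fun i => (1 : Matrix (Fin (n i)) (Fin (n i)) ℂ) ⊗ₖ C' i := by
            funext i
            simp only [Pi.add_apply]
            exact Matrix.kronecker_add _ _ _
          rw [hfun, Matrix.blockDiagonal'_add]
        map_smul' := by
          intro c C
          have hfun : (fun i => (1 : Matrix (Fin (n i)) (Fin (n i)) ℂ) ⊗ₖ (c • C) i)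
              = c • fun i => (1 : Matrix (Fin (n i)) (Fin (n i)) ℂ) ⊗ₖ C i := by
            funext i
            simp only [Pi.smul_apply]
            exact Matrix.kronecker_smul _ _ _
          rw [RingHom.id_apply, hfun, Matrix.blockDiagonal'_smul] }
    have hΦinj : Function.Injective Φ := by
      intro C C' hCC
      have h1 : (fun i => (1 : Matrix (Fin (n i)) (Fin (n i)) ℂ) ⊗ₖ C i)
          = fun i => (1 : Matrix (Fin (n i)) (Fin (n i)) ℂ) ⊗ₖ C' i :=
        Matrix.blockDiagonal'_injective hCC
      funext i
      ext a b
      have h2 := congrFun h1 i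
      have h3 := congrFun (congrFun h2 (⟨0, hn i⟩, a)) (⟨0, hn i⟩, b)
      simpa [Matrix.one_apply_eq] using h3
    have hle : Submodule.span ℂ
        (Set.range fun k : Fin d => OUB.Um n d ((k : ℕ) : ℤ)) ≤ LinearMap.range Φ := by
      rw [Submodule.span_le]
      rintro _ ⟨k, rfl⟩
      exact ⟨fun i => OUB.Bm n d i ((k : ℕ) : ℤ), rfl⟩
    have hrank : Module.finrank ℂ (LinearMap.range Φ)
        ≤ Module.finrank ℂ (Submodule.span ℂ
            (Set.range fun k : Fin d => OUB.Um n d ((k : ℕ) : ℤ))) := by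
      rw [LinearMap.finrank_range_of_inj hΦinj, finrank_span_eq_card hLI,
        Module.finrank_pi_fintype]
      simp [Module.finrank_matrix, hd, sq]
    have hspan := Submodule.eq_of_le_of_finrank_le hle hrank
    intro A hA
    obtain ⟨B, rfl⟩ := hA
    rw [hspan]
    exact ⟨B, rfl⟩
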